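/- arXiv:1704.05829 — 3 statements merged into one kernel-verified Lean document; each statement's English description precedes it below -/
import Mathlib

section
/- Let a be a probability density on ℝ^d and ω : ℝ^d → (0,∞) with nonempty sublevel sets Ω_λ = {x : ω(x) < λ} for all λ > 0. Suppose η := limsup_{λ→0+} sup_{x∈Ω_λ} (a∗ω)(x)/ω(x) ∈ (0,∞). Then for any δ ∈ (0,1) there exists λ ∈ (0,1) such that, with φ(x) := min{λ, ω(x)} and γ := max{1, (1+δ)η}, one has (a∗φ)(x) ≤ γ φ(x) for all x ∈ ℝ^d. -/
open Filter MeasureTheory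

noncomputable def conv {d : ℕ} (f g : EuclideanSpace ℝ (Fin d) → ℝ) :
    EuclideanSpace ℝ (Fin d) → ℝ := fun x => ∫ y, f (x - y) * g y

/-- `nconv f n = f^{*(n+1)}`, the (n+1)-fold convolution of `f`. -/
noncomputable def nconv {d : ℕ} (f : EuclideanSpace ℝ (Fin d) → ℝ) :
    ℕ → EuclideanSpace ℝ (Fin d) → ℝ
  | 0 => f
  | n + 1 => conv f (nconv f n)


theorem stmt_3 {d : ℕ} (a ω : EuclideanSpace ℝ (Fin d) → ℝ)
    (ha_meas : Measurable a) (ha_nn : ∀ x, 0 ≤ a x) (ha_int : ∫ x, a x = 1)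
    (hω_pos : ∀ x, 0 < ω x)
    (hΩ : ∀ l > (0:ℝ), ∃ x, ω x < l)
    (hconv_def : ∀ x, Integrable (fun y => a (x - y) * ω y))
    (η : ℝ) (hη_pos : 0 < η)
    (hη : Filter.limsup
        (fun l => ⨆ x ∈ {x | ω x < l}, conv a ω x / ω x) (nhdsWithin 0 (Set.Ioi 0)) = η) :
    ∀ δ ∈ Set.Ioo (0:ℝ) 1, ∃ lam ∈ Set.Ioo (0:ℝ) 1,
      ∀ x, conv a (fun y => min lam (ω y)) x ≤ max 1 ((1 + δ) * η) * min lam (ω x) := by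
  intro δ hδ
  have ha_integrable : Integrable a := by
    by_contra h
    rw [integral_undef h] at ha_int
    exact one_ne_zero ha_int.symm
  set u : ℝ → ℝ := fun l => ⨆ x ∈ {x | ω x < l}, conv a ω x / ω x with hu
  set g : ℝ → EuclideanSpace ℝ (Fin d) → ℝ :=
    fun l x => ⨆ _ : ω x < l, conv a ω x / ω x with hg
  -- frequently, the range of g l is bounded above
  have hfreq : ∃ᶠ l in nhdsWithin (0:ℝ) (Set.Ioi 0), BddAbove (Set.range (g l)) := by
    by_contra h
    rw [Filter.not_frequently] at h
    have h0 : ∀ᶠ l in nhdsWithin (0:ℝ) (Set.Ioi 0), u l = (0:ℝ) := by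
      filter_upwards [h] with l hl
      exact Real.iSup_of_not_bddAbove hl
    have : Filter.limsup u (nhdsWithin (0:ℝ) (Set.Ioi 0)) = 0 := by
      rw [Filter.limsup_congr h0, Filter.limsup_const]
    rw [hη] at this
    exact absurd this (ne_of_gt hη_pos)
  -- get an eventual upper bound b < (1+δ)η
  have hset : ∃ b ∈ {c | ∀ᶠ l in nhdsWithin (0:ℝ) (Set.Ioi 0), u l ≤ c}, b < (1 + δ) * η := by
    set T := {c | ∀ᶠ l in nhdsWithin (0:ℝ) (Set.Ioi 0), u l ≤ c} with hT
    have hinf : sInf T = η := by rw [← hη, Filter.limsup_eq]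
    have hne : T.Nonempty := by
      by_contra h
      rw [Set.not_nonempty_iff_eq_empty] at h
      rw [h, Real.sInf_empty] at hinf
      exact absurd hinf.symm (ne_of_gt hη_pos)
    have hbdd : BddBelow T := by
      by_contra h
      rw [Real.sInf_of_not_bddBelow h] at hinf
      exact absurd hinf.symm (ne_of_gt hη_pos)
    have : sInf T < (1 + δ) * η := by
      rw [hinf]; nlinarith [hδ.1, hη_pos]
    exact (csInf_lt_iff hbdd hne).mp this
  obtain ⟨b, hbT, hblt⟩ := hset
  have hev : ∀ᶠ l in nhdsWithin (0:ℝ) (Set.Ioi 0), u l ≤ b ∧ l ∈ Set.Ioo (0:ℝ) 1 := by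
    have h1 : ∀ᶠ l in nhdsWithin (0:ℝ) (Set.Ioi 0), l ∈ Set.Ioi (0:ℝ) :=
      self_mem_nhdsWithin
    have h2 : ∀ᶠ l in nhdsWithin (0:ℝ) (Set.Ioi 0), l < 1 := by
      apply eventually_nhdsWithin_of_eventually_nhds
      have : Set.Iio (1:ℝ) ∈ nhds (0:ℝ) := Iio_mem_nhds one_pos
      filter_upwards [this] with l hl using hl
    filter_upwards [hbT, h1, h2] with l hb hl1 hl2
    exact ⟨hb, hl1, hl2⟩
  obtain ⟨lam, hbddA, hub, hlam⟩ := (hfreq.and_eventually hev).exists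
  refine ⟨lam, hlam, fun x => ?_⟩
  set γ := max 1 ((1 + δ) * η) with hγ
  have hγ1 : (1:ℝ) ≤ γ := le_max_left _ _
  have hγη : (1 + δ) * η ≤ γ := le_max_right _ _
  -- integrability facts
  have hax : Integrable (fun y => a (x - y)) := ha_integrable.comp_sub_left x
  have haxl : Integrable (fun y => a (x - y) * lam) := hax.mul_const lam
  have hmin_eq : (fun y => a (x - y) * min lam (ω y)) =
      (fun y => a (x - y) * lam) ⊓ (fun y => a (x - y) * ω y) := by
    funext y
    simp only [Pi.inf_apply]
    exact mul_min_of_nonneg _ _ (ha_nn _)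
  have hint_phi : Integrable (fun y => a (x - y) * min lam (ω y)) := by
    rw [hmin_eq]; exact haxl.inf (hconv_def x)
  have hconv_phi_le_lam : conv a (fun y => min lam (ω y)) x ≤ lam := by
    have h1 : conv a (fun y => min lam (ω y)) x ≤ ∫ y, a (x - y) * lam := by
      apply integral_mono hint_phi haxl
      intro y
      exact mul_le_mul_of_nonneg_left (min_le_left _ _) (ha_nn _)
    have h2 : ∫ y, a (x - y) * lam = lam := by
      rw [integral_mul_const, integral_sub_left_eq_self a volume x, ha_int, one_mul]
    exact h1.trans h2.le
  by_cases hcase : ω x < lam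
  · -- x in sublevel set: use the sup bound
    have hle : conv a ω x / ω x ≤ u lam := by
      have h := le_ciSup hbddA x
      have h' : (⨆ _ : ω x < lam, conv a ω x / ω x) ≤ u lam := h
      rwa [ciSup_pos hcase] at h'
    have hb' : conv a ω x / ω x ≤ b := hle.trans hub
    have hωx := hω_pos x
    have hconvle : conv a ω x ≤ γ * ω x := by
      have : conv a ω x / ω x ≤ γ := hb'.trans (hblt.le.trans hγη)
      calc conv a ω x = (conv a ω x / ω x) * ω x := by field_simp
        _ ≤ γ * ω x := mul_le_mul_of_nonneg_right this hωx.le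
    have hphile : conv a (fun y => min lam (ω y)) x ≤ conv a ω x := by
      apply integral_mono hint_phi (hconv_def x)
      intro y
      exact mul_le_mul_of_nonneg_left (min_le_right _ _) (ha_nn _)
    have : min lam (ω x) = ω x := min_eq_right hcase.le
    rw [this]
    exact hphile.trans hconvle
  · -- ω x ≥ lam : φ x = lam
    push_neg at hcase
    have : min lam (ω x) = lam := min_eq_left hcase
    rw [this]
    calc conv a (fun y => min lam (ω y)) x ≤ lam := hconv_phi_le_lam
      _ = 1 * lam := (one_mul lam).symm
      _ ≤ γ * lam := mul_le_mul_of_nonneg_right hγ1 hlam.1.le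
end

section
/- Let a be a probability density on ℝ^d with a(x) ≤ b⁺(|x|) for a.a. x, where b⁺ is bounded, decreasing to 0 on ℝ₊ with ∫_0^∞ b⁺(s) s^{d−1} ds < ∞, and log b⁺(s) ∼ log b(s) as s → ∞ for b(s) = M (1+s)^{−(d+μ)}, μ, M > 0. Then with α₀ = (d + μ/2)/(d+μ), for every α ∈ (α₀, 1) the function ω(x) = b(|x|)^α satisfies limsup_{λ→0+} sup_{x: ω(x)<λ} (a∗ω)(x)/ω(x) ≤ 1. -/
open Filter MeasureTheory

set_option maxHeartbeats 1000000

theorem stmt_16 {d : ℕ} (hd : 1 ≤ d) (a : EuclideanSpace ℝ (Fin d) → ℝ)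
    (ha_meas : Measurable a) (ha_nn : ∀ x, 0 ≤ a x) (ha_int : ∫ x, a x = 1)
    (bp : ℝ → ℝ) (hbp_pos : ∀ s, 0 < bp s) (hbp_bdd : ∃ M, ∀ s, bp s ≤ M)
    (hbp_anti : StrictAntiOn bp (Set.Ici 0)) (hbp_to0 : Tendsto bp atTop (nhds 0))
    (hbp_int : IntegrableOn (fun s => bp s * s ^ (d - 1)) (Set.Ioi 0))
    (M μ : ℝ) (hM : 0 < M) (hμ : 0 < μ)
    (b : ℝ → ℝ) (hb : b = fun s => M * (1 + s) ^ (-((d:ℝ) + μ)))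
    (hlogeq : Tendsto (fun s => Real.log (bp s) / Real.log (b s)) atTop (nhds 1))
    (hab : ∀ᵐ x, a x ≤ bp ‖x‖) :
    ∀ α ∈ Set.Ioo (((d:ℝ) + μ / 2) / ((d:ℝ) + μ)) 1,
      Filter.limsup
          (fun l => ⨆ x ∈ {x : EuclideanSpace ℝ (Fin d) | b ‖x‖ ^ α < l},
            conv a (fun y => b ‖y‖ ^ α) x / b ‖x‖ ^ α)
          (nhdsWithin 0 (Set.Ioi 0)) ≤ 1 := by
  intro α hα
  obtain ⟨hα₀, hα1⟩ := hα
  subst hb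
  set p : ℝ := (d : ℝ) + μ with hp_def
  have hp : 0 < p := by positivity
  have hα_pos : 0 < α := lt_trans (by positivity) hα₀
  set q : ℝ := α * p with hq_def
  have hq_pos : 0 < q := mul_pos hα_pos hp
  have hdq : (d : ℝ) < q := by
    have h1 : (d:ℝ) + μ/2 < α * p := (div_lt_iff₀ hp).mp hα₀
    nlinarith
  have hqp : q < p := by nlinarith
  -- rewrite ω
  have hωeq : ∀ x : EuclideanSpace ℝ (Fin d),
      (M * (1 + ‖x‖) ^ (-p)) ^ α = M ^ α * (1 + ‖x‖) ^ (-q) := by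
    intro x
    have h1 : (0:ℝ) ≤ 1 + ‖x‖ := by positivity
    rw [Real.mul_rpow hM.le (Real.rpow_nonneg h1 _), ← Real.rpow_mul h1,
      show -p * α = -q by rw [hq_def]; ring]
  have hωx_pos : ∀ x : EuclideanSpace ℝ (Fin d), 0 < M ^ α * (1 + ‖x‖) ^ (-q) :=
    fun x => by positivity
  -- integrability of a
  have ha_int' : Integrable a := by
    by_contra h
    rw [integral_undef h] at ha_int; norm_num at ha_int
  -- integrability of ω
  have hω_meas : Measurable (fun y : EuclideanSpace ℝ (Fin d) => M ^ α * (1 + ‖y‖) ^ (-q)) := by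
    fun_prop
  have hω_int : Integrable (fun y : EuclideanSpace ℝ (Fin d) => M ^ α * (1 + ‖y‖) ^ (-q)) := by
    have hint0 : Integrable (fun y : EuclideanSpace ℝ (Fin d) => (1 + ‖y‖) ^ (-q)) := by
      apply integrable_one_add_norm
      simpa using hdq
    exact hint0.const_mul _
  set Cω : ℝ := ∫ y : EuclideanSpace ℝ (Fin d), M ^ α * (1 + ‖y‖) ^ (-q) with hCω_def
  have hCω_nonneg : 0 ≤ Cω :=
    integral_nonneg fun y => (hωx_pos y).le
  -- tail upper bound for bp
  set β : ℝ := (1 + α) / 2 with hβ_def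
  have hβ1 : α < β := by rw [hβ_def]; linarith
  have hβ2 : β < 1 := by rw [hβ_def]; linarith
  have hβ_pos : 0 < β := by linarith
  have hqβ : q < β * p := by rw [hq_def]; nlinarith
  have hbtend : Tendsto (fun s : ℝ => M * (1 + s) ^ (-p)) atTop (nhds 0) := by
    have h0 : Tendsto (fun s : ℝ => (1 + s) ^ (-p)) atTop (nhds 0) := by
      have := (tendsto_rpow_neg_atTop hp).comp
        (tendsto_atTop_add_const_left atTop 1 (tendsto_id (α := ℝ)))
      simpa [Function.comp_def] using this
    simpa using h0.const_mul M
  have hbp_upper : ∀ᶠ s in atTop, bp s ≤ (M * (1 + s) ^ (-p)) ^ β := by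
    have hb_small : ∀ᶠ s in atTop, M * (1 + s) ^ (-p) < 1 :=
      hbtend.eventually_lt_const one_pos
    have hratio : ∀ᶠ s in atTop, β < Real.log (bp s) / Real.log (M * (1 + s) ^ (-p)) :=
      hlogeq.eventually_const_lt hβ2
    filter_upwards [hb_small, hratio, eventually_ge_atTop (0:ℝ)] with s h1 h2 h3
    have hbpos : 0 < M * (1 + s) ^ (-p) := by positivity
    have hlogneg : Real.log (M * (1 + s) ^ (-p)) < 0 := Real.log_neg hbpos h1
    have h4 : Real.log (bp s) < β * Real.log (M * (1 + s) ^ (-p)) :=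
      (lt_div_iff_of_neg hlogneg).mp h2
    have h5 : Real.log (bp s) < Real.log ((M * (1 + s) ^ (-p)) ^ β) := by
      rw [Real.log_rpow hbpos]; linarith
    have h6 := Real.exp_lt_exp.mpr h5
    rw [Real.exp_log (hbp_pos s), Real.exp_log (Real.rpow_pos_of_pos hbpos β)] at h6
    exact h6.le
  -- the main estimate for each ε > 0
  refine le_of_forall_pos_le_add fun ε hε => ?_
  have hε2 : (0:ℝ) < 1 + ε / 2 := by linarith
  set c : ℝ := (1 + ε / 2) ^ (-(1 / q)) with hc_def
  have hc_pos : 0 < c := Real.rpow_pos_of_pos hε2 _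
  have hc_lt1 : c < 1 :=
    Real.rpow_lt_one_of_one_lt_of_neg (by linarith) (by rw [neg_lt_zero]; positivity)
  have hcq : c ^ (-q) = 1 + ε / 2 := by
    rw [hc_def, ← Real.rpow_mul hε2.le, show -(1 / q) * -q = 1 by field_simp]
    exact Real.rpow_one _
  set θ : ℝ := 1 - c with hθ_def
  have hθ_pos : 0 < θ := by rw [hθ_def]; linarith
  have hθ_le1 : θ ≤ 1 := by rw [hθ_def]; linarith
  -- region A estimate
  have hA : ∀ x y : EuclideanSpace ℝ (Fin d), c * ‖x‖ ≤ ‖y‖ →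
      M ^ α * (1 + ‖y‖) ^ (-q) ≤ (1 + ε / 2) * (M ^ α * (1 + ‖x‖) ^ (-q)) := by
    intro x y hxy
    have h1 : (0:ℝ) < 1 + ‖x‖ := by positivity
    have h2 : c * (1 + ‖x‖) ≤ 1 + ‖y‖ := by nlinarith [norm_nonneg x, norm_nonneg y]
    have h3 : (1 + ‖y‖) ^ (-q) ≤ (c * (1 + ‖x‖)) ^ (-q) :=
      Real.rpow_le_rpow_of_nonpos (by positivity) h2 (by linarith)
    have h4 : (c * (1 + ‖x‖)) ^ (-q) = (1 + ε / 2) * (1 + ‖x‖) ^ (-q) := by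
      rw [Real.mul_rpow hc_pos.le h1.le, hcq]
    calc M ^ α * (1 + ‖y‖) ^ (-q) ≤ M ^ α * ((1 + ε / 2) * (1 + ‖x‖) ^ (-q)) := by
          rw [← h4]; exact mul_le_mul_of_nonneg_left h3 (Real.rpow_nonneg hM.le α)
      _ = (1 + ε / 2) * (M ^ α * (1 + ‖x‖) ^ (-q)) := by ring
  -- tail estimate
  set K : ℝ := Cω * (M ^ β * θ ^ (-(β * p))) with hK_def
  have hKtend : Tendsto (fun t : ℝ => K * (1 + t) ^ (q - β * p)) atTop (nhds 0) := by
    have h0 : Tendsto (fun t : ℝ => (1 + t) ^ (-(β * p - q))) atTop (nhds 0) := by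
      have := (tendsto_rpow_neg_atTop (show 0 < β * p - q by linarith)).comp
        (tendsto_atTop_add_const_left atTop 1 (tendsto_id (α := ℝ)))
      simpa [Function.comp_def] using this
    have h0' : Tendsto (fun t : ℝ => (1 + t) ^ (q - β * p)) atTop (nhds 0) := by
      convert h0 using 3; ring
    simpa using h0'.const_mul K
  have htail : ∀ᶠ t in atTop, Cω * bp (θ * t) ≤ ε / 2 * (M ^ α * (1 + t) ^ (-q)) := by
    have hθt : Tendsto (fun t : ℝ => θ * t) atTop atTop :=
      Tendsto.const_mul_atTop hθ_pos tendsto_id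
    filter_upwards [hθt.eventually hbp_upper, eventually_ge_atTop (0:ℝ),
        hKtend.eventually_lt_const (show (0:ℝ) < ε / 2 * M ^ α by positivity)] with t h1 h2 h3
    have ht1 : (0:ℝ) < 1 + t := by linarith
    have hbb : (M * (1 + θ * t) ^ (-p)) ^ β = M ^ β * (1 + θ * t) ^ (-(β * p)) := by
      rw [Real.mul_rpow hM.le (Real.rpow_nonneg (by positivity) _),
        ← Real.rpow_mul (by positivity), show -p * β = -(β * p) by ring]
    have h5 : (1 + θ * t) ^ (-(β * p)) ≤ θ ^ (-(β * p)) * (1 + t) ^ (-(β * p)) := by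
      have h6 : θ * (1 + t) ≤ 1 + θ * t := by nlinarith [hθ_le1, h2, mul_nonneg hθ_pos.le h2]
      have h7 : (1 + θ * t) ^ (-(β * p)) ≤ (θ * (1 + t)) ^ (-(β * p)) :=
        Real.rpow_le_rpow_of_nonpos (by positivity) h6 (by nlinarith)
      rwa [Real.mul_rpow hθ_pos.le ht1.le] at h7
    have h8 : Cω * bp (θ * t) ≤ K * (1 + t) ^ (-(β * p)) := by
      have h9 : bp (θ * t) ≤ M ^ β * (θ ^ (-(β * p)) * (1 + t) ^ (-(β * p))) := by
        refine le_trans h1 ?_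
        rw [hbb]
        exact mul_le_mul_of_nonneg_left h5 (Real.rpow_nonneg hM.le β)
      calc Cω * bp (θ * t) ≤ Cω * (M ^ β * (θ ^ (-(β * p)) * (1 + t) ^ (-(β * p)))) :=
            mul_le_mul_of_nonneg_left h9 hCω_nonneg
        _ = K * (1 + t) ^ (-(β * p)) := by rw [hK_def]; ring
    have h10 : K * (1 + t) ^ (-(β * p)) = (K * (1 + t) ^ (q - β * p)) * (1 + t) ^ (-q) := by
      have hadd := Real.rpow_add ht1 (q - β * p) (-q)
      rw [show q - β * p + -q = -(β * p) by ring] at hadd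
      rw [hadd]; ring
    refine h8.trans ?_
    rw [h10]
    have h11 : (0:ℝ) ≤ (1 + t) ^ (-q) := Real.rpow_nonneg ht1.le _
    calc (K * (1 + t) ^ (q - β * p)) * (1 + t) ^ (-q)
        ≤ (ε / 2 * M ^ α) * (1 + t) ^ (-q) := mul_le_mul_of_nonneg_right h3.le h11
      _ = ε / 2 * (M ^ α * (1 + t) ^ (-q)) := by ring
  obtain ⟨T, hT⟩ := eventually_atTop.mp htail
  set R : ℝ := max T 0 with hR_def
  have hR0 : 0 ≤ R := le_max_right _ _
  -- main pointwise bound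
  have hmain : ∀ x : EuclideanSpace ℝ (Fin d), R < ‖x‖ →
      (∫ y, a (x - y) * (M ^ α * (1 + ‖y‖) ^ (-q))) / (M ^ α * (1 + ‖x‖) ^ (-q)) ≤ 1 + ε := by
    intro x hx
    have hωxp : 0 < M ^ α * (1 + ‖x‖) ^ (-q) := hωx_pos x
    rw [div_le_iff₀ hωxp]
    have hax : Integrable (fun y => a (x - y)) :=
      ((Measure.measurePreserving_sub_left volume x).integrable_comp
        ha_int'.aestronglyMeasurable).2 ha_int'
    have haxm : Measurable (fun y : EuclideanSpace ℝ (Fin d) => a (x - y)) :=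
      ha_meas.comp (measurable_const.sub measurable_id)
    have hax1 : ∫ y, a (x - y) = 1 := by
      rw [integral_sub_left_eq_self a volume x]; exact ha_int
    have hωle : ∀ y : EuclideanSpace ℝ (Fin d), M ^ α * (1 + ‖y‖) ^ (-q) ≤ M ^ α := by
      intro y
      have h1 : (1 + ‖y‖) ^ (-q) ≤ 1 :=
        Real.rpow_le_one_of_one_le_of_nonpos (by linarith [norm_nonneg y]) (by linarith)
      nlinarith [Real.rpow_nonneg hM.le α]
    have hfint : Integrable (fun y => a (x - y) * (M ^ α * (1 + ‖y‖) ^ (-q))) := by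
      refine Integrable.mono' (hax.const_mul (M ^ α))
        ((haxm.mul hω_meas).aestronglyMeasurable) ?_
      filter_upwards with y
      rw [Real.norm_eq_abs, abs_of_nonneg (mul_nonneg (ha_nn _) (hωx_pos y).le)]
      calc a (x - y) * (M ^ α * (1 + ‖y‖) ^ (-q)) ≤ a (x - y) * M ^ α :=
            mul_le_mul_of_nonneg_left (hωle y) (ha_nn _)
        _ = M ^ α * a (x - y) := mul_comm _ _
    set A : Set (EuclideanSpace ℝ (Fin d)) := {y | c * ‖x‖ ≤ ‖y‖} with hA_def
    have hA_meas : MeasurableSet A := measurableSet_le measurable_const measurable_norm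
    have hIA : ∫ y in A, a (x - y) * (M ^ α * (1 + ‖y‖) ^ (-q))
        ≤ (1 + ε / 2) * (M ^ α * (1 + ‖x‖) ^ (-q)) := by
      have step1 : ∫ y in A, a (x - y) * (M ^ α * (1 + ‖y‖) ^ (-q))
          ≤ ∫ y in A, a (x - y) * ((1 + ε / 2) * (M ^ α * (1 + ‖x‖) ^ (-q))) := by
        refine setIntegral_mono_on hfint.integrableOn (hax.mul_const _).integrableOn hA_meas ?_
        intro y hy
        exact mul_le_mul_of_nonneg_left (hA x y hy) (ha_nn _)
      have step2 : ∫ y in A, a (x - y) * ((1 + ε / 2) * (M ^ α * (1 + ‖x‖) ^ (-q)))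
          = (∫ y in A, a (x - y)) * ((1 + ε / 2) * (M ^ α * (1 + ‖x‖) ^ (-q))) :=
        integral_mul_const _ _
      have step3 : ∫ y in A, a (x - y) ≤ 1 := by
        rw [← hax1]
        exact setIntegral_le_integral hax (Filter.Eventually.of_forall fun y => ha_nn _)
      have step4 : 0 ≤ (1 + ε / 2) * (M ^ α * (1 + ‖x‖) ^ (-q)) := by positivity
      calc ∫ y in A, a (x - y) * (M ^ α * (1 + ‖y‖) ^ (-q))
          ≤ (∫ y in A, a (x - y)) * ((1 + ε / 2) * (M ^ α * (1 + ‖x‖) ^ (-q))) := by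
            rw [← step2]; exact step1
        _ ≤ 1 * ((1 + ε / 2) * (M ^ α * (1 + ‖x‖) ^ (-q))) :=
            mul_le_mul_of_nonneg_right step3 step4
        _ = (1 + ε / 2) * (M ^ α * (1 + ‖x‖) ^ (-q)) := one_mul _
    have hIB : ∫ y in Aᶜ, a (x - y) * (M ^ α * (1 + ‖y‖) ^ (-q))
        ≤ ε / 2 * (M ^ α * (1 + ‖x‖) ^ (-q)) := by
      have hxa_ae : ∀ᵐ y : EuclideanSpace ℝ (Fin d), a (x - y) ≤ bp ‖x - y‖ :=
        (Measure.measurePreserving_sub_left volume x).quasiMeasurePreserving.tendsto_ae.eventually hab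
      have step1 : ∫ y in Aᶜ, a (x - y) * (M ^ α * (1 + ‖y‖) ^ (-q))
          ≤ ∫ y in Aᶜ, bp (θ * ‖x‖) * (M ^ α * (1 + ‖y‖) ^ (-q)) := by
        refine setIntegral_mono_on_ae hfint.integrableOn (hω_int.const_mul _).integrableOn
          hA_meas.compl ?_
        filter_upwards [hxa_ae] with y hy hyB
        have h1 : ‖y‖ < c * ‖x‖ := not_le.mp hyB
        have h2 : θ * ‖x‖ ≤ ‖x - y‖ := by
          have h2' := norm_sub_norm_le x y
          rw [hθ_def]; nlinarith [norm_nonneg x]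
        have h3 : bp ‖x - y‖ ≤ bp (θ * ‖x‖) := by
          rcases eq_or_lt_of_le h2 with h | h
          · rw [h]
          · exact (hbp_anti (Set.mem_Ici.mpr (by positivity))
              (Set.mem_Ici.mpr (norm_nonneg _)) h).le
        exact mul_le_mul_of_nonneg_right (le_trans hy h3) (hωx_pos y).le
      have step2 : ∫ y in Aᶜ, bp (θ * ‖x‖) * (M ^ α * (1 + ‖y‖) ^ (-q))
          ≤ bp (θ * ‖x‖) * Cω := by
        rw [integral_const_mul]
        refine mul_le_mul_of_nonneg_left ?_ (hbp_pos _).le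
        exact setIntegral_le_integral hω_int (Filter.Eventually.of_forall fun y => (hωx_pos y).le)
      have step3 : Cω * bp (θ * ‖x‖) ≤ ε / 2 * (M ^ α * (1 + ‖x‖) ^ (-q)) :=
        hT ‖x‖ (le_trans (le_max_left T 0) hx.le)
      calc ∫ y in Aᶜ, a (x - y) * (M ^ α * (1 + ‖y‖) ^ (-q))
          ≤ bp (θ * ‖x‖) * Cω := step1.trans step2
        _ = Cω * bp (θ * ‖x‖) := mul_comm _ _
        _ ≤ ε / 2 * (M ^ α * (1 + ‖x‖) ^ (-q)) := step3
    have hsplit : (∫ y in A, a (x - y) * (M ^ α * (1 + ‖y‖) ^ (-q)))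
        + ∫ y in Aᶜ, a (x - y) * (M ^ α * (1 + ‖y‖) ^ (-q))
        = ∫ y, a (x - y) * (M ^ α * (1 + ‖y‖) ^ (-q)) :=
      integral_add_compl hA_meas hfint
    calc ∫ y, a (x - y) * (M ^ α * (1 + ‖y‖) ^ (-q))
        = (∫ y in A, a (x - y) * (M ^ α * (1 + ‖y‖) ^ (-q)))
          + ∫ y in Aᶜ, a (x - y) * (M ^ α * (1 + ‖y‖) ^ (-q)) := hsplit.symm
      _ ≤ (1 + ε / 2) * (M ^ α * (1 + ‖x‖) ^ (-q))
          + ε / 2 * (M ^ α * (1 + ‖x‖) ^ (-q)) := add_le_add hIA hIB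
      _ = (1 + ε) * (M ^ α * (1 + ‖x‖) ^ (-q)) := by ring
  -- eventual bound for the sup
  set l₀ : ℝ := M ^ α * (1 + R) ^ (-q) with hl₀_def
  have hl₀_pos : 0 < l₀ := by positivity
  have hev : ∀ᶠ l in nhdsWithin (0:ℝ) (Set.Ioi 0),
      (⨆ x ∈ {x : EuclideanSpace ℝ (Fin d) | (M * (1 + ‖x‖) ^ (-p)) ^ α < l},
        conv a (fun y => (M * (1 + ‖y‖) ^ (-p)) ^ α) x / (M * (1 + ‖x‖) ^ (-p)) ^ α) ≤ 1 + ε := by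
    filter_upwards [Ioo_mem_nhdsGT_of_mem (Set.mem_Ico.mpr ⟨le_refl (0:ℝ), hl₀_pos⟩)]
      with l hl
    refine Real.iSup_le (fun x => ?_) (by linarith)
    refine Real.iSup_le (fun hxS => ?_) (by linarith)
    change (M * (1 + ‖x‖) ^ (-p)) ^ α < l at hxS
    rw [hωeq x] at hxS
    have hRx : R < ‖x‖ := by
      by_contra hcon
      push_neg at hcon
      have h1 : (1 + R) ^ (-q) ≤ (1 + ‖x‖) ^ (-q) :=
        Real.rpow_le_rpow_of_nonpos (by positivity) (by linarith) (by linarith)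
      have h2 : l₀ ≤ M ^ α * (1 + ‖x‖) ^ (-q) := by
        rw [hl₀_def]
        exact mul_le_mul_of_nonneg_left h1 (Real.rpow_nonneg hM.le α)
      have h3 : l < l₀ := hl.2
      linarith
    have hconv_eq : conv a (fun y => (M * (1 + ‖y‖) ^ (-p)) ^ α) x
        = ∫ y, a (x - y) * (M ^ α * (1 + ‖y‖) ^ (-q)) := by
      show (∫ y, a (x - y) * (M * (1 + ‖y‖) ^ (-p)) ^ α) = _
      refine integral_congr_ae (Filter.Eventually.of_forall fun y => ?_)
      show a (x - y) * (M * (1 + ‖y‖) ^ (-p)) ^ α = a (x - y) * (M ^ α * (1 + ‖y‖) ^ (-q))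
      rw [hωeq y]
    rw [hconv_eq, hωeq x]
    exact hmain x hRx
  beta_reduce
  have hnn : ∀ᶠ l in nhdsWithin (0:ℝ) (Set.Ioi 0), (0:ℝ) ≤
      ⨆ x ∈ {x : EuclideanSpace ℝ (Fin d) | (M * (1 + ‖x‖) ^ (-p)) ^ α < l},
        conv a (fun y => (M * (1 + ‖y‖) ^ (-p)) ^ α) x / (M * (1 + ‖x‖) ^ (-p)) ^ α := by
    refine Filter.Eventually.of_forall fun l => ?_
    refine Real.iSup_nonneg fun x => Real.iSup_nonneg fun _ => div_nonneg ?_ ?_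
    · exact integral_nonneg fun y => mul_nonneg (ha_nn _)
        (Real.rpow_nonneg (by positivity) _)
    · exact Real.rpow_nonneg (by positivity) _
  have hcb : IsCoboundedUnder (· ≤ ·) (nhdsWithin (0:ℝ) (Set.Ioi 0))
      (fun l => ⨆ x ∈ {x : EuclideanSpace ℝ (Fin d) | (M * (1 + ‖x‖) ^ (-p)) ^ α < l},
        conv a (fun y => (M * (1 + ‖y‖) ^ (-p)) ^ α) x / (M * (1 + ‖x‖) ^ (-p)) ^ α) :=
    isCoboundedUnder_le_of_eventually_le _ hnn
  exact Filter.limsup_le_of_le hcb hev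
end

section
/- Let b ∈ L¹(ℝ) be even, positive, decreasing to 0 on ℝ₊, and long-tailed, such that ∫_{r_b}^∞ b(s−τ) b(τ) dτ ≤ B b(s) for all s > ρ_b (some B, r_b, ρ_b > 0). Let a be a probability density on ℝ^d with lim_{|x|→∞} a(x) |x|^{d−1} / b(|x|) = 0. Then ω(x) := b(|x|) satisfies limsup_{λ→0+} sup_{x: ω(x)<λ} (a∗ω)(x)/ω(x) ≤ 1. -/
open Filter MeasureTheory Set Metric
open scoped ENNReal NNReal

section helper
variable {E : Type*} [NormedAddCommGroup E] [NormedSpace ℝ E] [MeasurableSpace E]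
  [BorelSpace E] [FiniteDimensional ℝ E] [Nontrivial E]
  (μ : Measure E) [μ.IsAddHaarMeasure]

lemma my_lintegral_norm (f : ℝ → ℝ≥0∞) (hf : Measurable f) :
    ∫⁻ x, f ‖x‖ ∂μ = μ.toSphere Set.univ *
      ∫⁻ r in Set.Ioi (0:ℝ), ENNReal.ofReal (r ^ (Module.finrank ℝ E - 1)) * f r := by
  calc ∫⁻ x, f ‖x‖ ∂μ = ∫⁻ x : ({(0:E)}ᶜ : Set E), f ‖x.1‖ ∂(μ.comap (↑)) := by
        rw [lintegral_subtype_comap (measurableSet_singleton _).compl fun x => f ‖x‖,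
          MeasureTheory.restrict_compl_singleton]
    _ = ∫⁻ p : sphere (0:E) 1 × Ioi (0:ℝ), f p.2
          ∂(μ.toSphere.prod (.volumeIoiPow (Module.finrank ℝ E - 1))) := by
        have h := μ.measurePreserving_homeomorphUnitSphereProd.lintegral_comp_emb
          (Homeomorph.measurableEmbedding _) (fun p => f p.2)
        simpa using h
    _ = μ.toSphere Set.univ * ∫⁻ r : Ioi (0:ℝ), f r ∂(.volumeIoiPow (Module.finrank ℝ E - 1)) := by
        have h := MeasureTheory.lintegral_prod (μ := μ.toSphere)
          (ν := Measure.volumeIoiPow (Module.finrank ℝ E - 1))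
          (fun p : sphere (0:E) 1 × Ioi (0:ℝ) => f p.2)
          (((hf.comp measurable_subtype_coe).comp measurable_snd).aemeasurable)
        rw [h]
        simp [lintegral_const, mul_comm]
    _ = _ := by
        congr 1
        rw [Measure.volumeIoiPow, lintegral_withDensity_eq_lintegral_mul _
          (by fun_prop)
          (show Measurable fun r : Ioi (0:ℝ) => f r.1 from hf.comp measurable_subtype_coe),
          ]
        simp only [Pi.mul_apply]
        rw [lintegral_subtype_comap measurableSet_Ioi
          (fun r => ENNReal.ofReal (r ^ (Module.finrank ℝ E - 1)) * f r)]
end helper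

section helper2
variable {E : Type*} [NormedAddCommGroup E] [NormedSpace ℝ E] [MeasurableSpace E]
  [BorelSpace E] [FiniteDimensional ℝ E] [Nontrivial E]
  (μ : Measure E) [μ.IsAddHaarMeasure]

lemma my_integrable_norm {f : ℝ → ℝ} (hf : Measurable f)
    (hfin : ∫⁻ r in Set.Ioi (0:ℝ), ENNReal.ofReal (r ^ (Module.finrank ℝ E - 1)) *
      (‖f r‖₊ : ℝ≥0∞) < ⊤) :
    Integrable (fun x : E => f ‖x‖) μ := by
  refine ⟨(hf.comp measurable_norm).aestronglyMeasurable, ?_⟩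
  rw [HasFiniteIntegral]
  rw [my_lintegral_norm μ (fun r => ‖f r‖ₑ) hf.enorm]
  exact ENNReal.mul_lt_top (measure_lt_top _ _) hfin
end helper2


-- basic b facts
lemma b_abs (b : ℝ → ℝ) (hb_even : ∀ s, b (-s) = b s) (s : ℝ) : b s = b |s| := by
  rcases abs_cases s with ⟨h, _⟩ | ⟨h, _⟩
  · rw [h]
  · rw [h, hb_even]

lemma b_mono (b : ℝ → ℝ) (hb_even : ∀ s, b (-s) = b s) (hb_anti : AntitoneOn b (Set.Ici 0))
    {u t : ℝ} (h : |u| ≤ |t|) : b t ≤ b u := by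
  rw [b_abs b hb_even t, b_abs b hb_even u]
  exact hb_anti (abs_nonneg u) (le_trans (abs_nonneg u) h) h

lemma b_meas (b : ℝ → ℝ) (hb_even : ∀ s, b (-s) = b s) (hb_anti : AntitoneOn b (Set.Ici 0)) :
    Measurable b := by
  have hg : Antitone (fun r : ℝ => b (max r 0)) := fun r₁ r₂ h =>
    hb_anti (Set.mem_Ici.mpr (le_max_right _ _)) (Set.mem_Ici.mpr (le_max_right _ _)) (max_le_max h le_rfl)
  have : b = fun s => (fun r : ℝ => b (max r 0)) |s| := by
    funext s
    simp only [max_eq_left (abs_nonneg s), ← b_abs b hb_even]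
  rw [this]
  exact hg.measurable.comp measurable_abs

set_option maxHeartbeats 1000000 in
lemma key_bound {d : ℕ} (hd : 1 ≤ d)
    (b : ℝ → ℝ) (hb_int : Integrable b) (hb_even : ∀ s, b (-s) = b s)
    (hb_pos : ∀ s, 0 < b s) (hb_anti : AntitoneOn b (Set.Ici 0))
    (hb_lt : ∀ τ ≥ (0:ℝ), Tendsto (fun s => b (s + τ) / b s) atTop (nhds 1))
    (B rb ρb : ℝ) (hB : 0 < B) (hrb : 0 < rb) (hρb : 0 < ρb)
    (hsub : ∀ s > ρb, ∫ τ in Set.Ioi rb, b (s - τ) * b τ ≤ B * b s)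
    (a : EuclideanSpace ℝ (Fin d) → ℝ)
    (ha_meas : Measurable a) (ha_nn : ∀ x, 0 ≤ a x) (ha_int : ∫ x, a x = 1)
    (ha_small : Tendsto (fun x : EuclideanSpace ℝ (Fin d) =>
        a x * ‖x‖ ^ (d - 1) / b ‖x‖) (Filter.comap (fun x => ‖x‖) atTop) (nhds 0))
    {ε : ℝ} (hε : 0 < ε) :
    ∃ N : ℝ, 0 ≤ N ∧ ∀ x : EuclideanSpace ℝ (Fin d), N ≤ ‖x‖ →
      (∫ y, a y * b ‖x - y‖) ≤ (1 + ε) * b ‖x‖ := by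
  classical
  haveI : Nonempty (Fin d) := Fin.pos_iff_nonempty.mp hd
  haveI : Nontrivial (EuclideanSpace ℝ (Fin d)) := by
    apply Module.nontrivial_of_finrank_pos (R := ℝ)
    rw [finrank_euclideanSpace_fin]; exact hd
  have hdim : Module.finrank ℝ (EuclideanSpace ℝ (Fin d)) = d := finrank_euclideanSpace_fin
  have hb0 : ∀ s, 0 ≤ b s := fun s => (hb_pos s).le
  have hbm := b_meas b hb_even hb_anti
  have hbtop : ∀ t, b t ≤ b 0 := fun t => b_mono b hb_even hb_anti (by simp)
  have ha_intg : Integrable a := by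
    by_contra h
    rw [integral_undef h] at ha_int
    exact one_ne_zero ha_int.symm
  -- σ
  set σ : ℝ := (d : ℝ) * (volume (ball (0:EuclideanSpace ℝ (Fin d)) 1)).toReal with hσdef
  have hσ : 0 ≤ σ := mul_nonneg (Nat.cast_nonneg d) ENNReal.toReal_nonneg
  set ε₁ : ℝ := ε / (2 * (σ * B + 1)) with hε₁def
  have hσB : 0 < σ * B + 1 := by nlinarith
  have hε₁ : 0 < ε₁ := by positivity
  have hε₁' : ε₁ * (σ * B) ≤ ε / 2 := by
    have : ε₁ * (σ * B + 1) = ε / 2 := by rw [hε₁def, div_mul_eq_mul_div, div_eq_div_iff (mul_pos two_pos hσB).ne' (by norm_num)]; ring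
    nlinarith
  -- a tail bound
  obtain ⟨R₀, hR₀⟩ : ∃ R₀ : ℝ, ∀ y : EuclideanSpace ℝ (Fin d), R₀ ≤ ‖y‖ → a y ≤ ε₁ * b ‖y‖ / ‖y‖ ^ (d - 1) := by
    have h1 := ha_small.eventually (eventually_lt_nhds hε₁)
    rw [eventually_comap] at h1
    rw [eventually_atTop] at h1
    obtain ⟨R₀', h1⟩ := h1
    refine ⟨max R₀' 1, fun y hy => ?_⟩
    have hy1 : (1:ℝ) ≤ ‖y‖ := le_trans (le_max_right _ _) hy
    have h2 := h1 ‖y‖ (le_trans (le_max_left _ _) hy) y rfl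
    have hp : (0:ℝ) < ‖y‖ ^ (d - 1) := by positivity
    rw [div_lt_iff₀ (hb_pos _)] at h2
    rw [le_div_iff₀ hp]
    nlinarith [ha_nn y, hb_pos ‖y‖]
  -- long-tail bound
  obtain ⟨N₁, hN₁⟩ : ∃ N₁ : ℝ, ∀ s, N₁ ≤ s → b (s - max (max rb R₀) 1) ≤ (1 + ε / 2) * b s := by
    set R' : ℝ := max (max rb R₀) 1 with hR'def
    have hR'0 : (0:ℝ) ≤ R' := le_trans zero_le_one (le_max_right _ _)
    have T1 := hb_lt R' hR'0
    have T2 : Tendsto (fun s => b s / b (s - R')) atTop (nhds 1) := by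
      have := T1.comp (tendsto_atTop_add_const_right atTop (-R') tendsto_id)
      refine this.congr fun s => ?_
      simp only [Function.comp_apply, id]
      ring_nf
    have hlt : (1 + ε / 2)⁻¹ < 1 := by
      rw [inv_lt_one_iff₀]; right; linarith
    have h3 := T2.eventually (eventually_gt_nhds hlt)
    rw [eventually_atTop] at h3
    obtain ⟨N₁, h3⟩ := h3
    refine ⟨N₁, fun s hs => ?_⟩
    have h4 := h3 s hs
    rw [lt_div_iff₀ (hb_pos _)] at h4
    have hinv : (1 + ε / 2) * (1 + ε / 2)⁻¹ = 1 := mul_inv_cancel₀ (by linarith)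
    nlinarith [hb_pos (s - R'), hb_pos s]
  set R : ℝ := max (max rb R₀) 1 with hRdef
  have hR1 : (1:ℝ) ≤ R := le_max_right _ _
  have hRrb : rb ≤ R := le_trans (le_max_left _ _) (le_max_left _ _)
  have hRR₀ : R₀ ≤ R := le_trans (le_max_right _ _) (le_max_left _ _)
  refine ⟨max N₁ (max (ρb + 1) R), le_trans (by linarith : (0:ℝ) ≤ ρb + 1)
    (le_trans (le_max_left _ _) (le_max_right _ _)), fun x hx => ?_⟩
  set s : ℝ := ‖x‖ with hsdef
  have hsN₁ : N₁ ≤ s := le_trans (le_max_left _ _) hx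
  have hsρ : ρb < s := lt_of_lt_of_le (by linarith)
    (le_trans (le_trans (le_max_left _ _) (le_max_right _ _)) hx)
  have hsR : R ≤ s := le_trans (le_trans (le_max_right _ _) (le_max_right _ _)) hx
  -- integrand on E
  have hmeas_integrand : Measurable fun y : EuclideanSpace ℝ (Fin d) => a y * b ‖x - y‖ :=
    ha_meas.mul (hbm.comp ((measurable_id.const_sub x).norm))
  have hint_integrand : Integrable fun y : EuclideanSpace ℝ (Fin d) => a y * b ‖x - y‖ := by
    refine Integrable.mono' (ha_intg.const_mul (b 0)) hmeas_integrand.aestronglyMeasurable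
      (Filter.Eventually.of_forall fun y => ?_)
    rw [Real.norm_eq_abs, abs_of_nonneg (mul_nonneg (ha_nn y) (hb0 _))]
    calc a y * b ‖x - y‖ ≤ a y * b 0 := mul_le_mul_of_nonneg_left (hbtop _) (ha_nn y)
      _ = b 0 * a y := mul_comm _ _
  -- split
  have hsplit : (∫ y, a y * b ‖x - y‖) =
      (∫ y in closedBall (0:EuclideanSpace ℝ (Fin d)) R, a y * b ‖x - y‖) +
      (∫ y in (closedBall (0:EuclideanSpace ℝ (Fin d)) R)ᶜ, a y * b ‖x - y‖) :=
    (integral_add_compl measurableSet_closedBall hint_integrand).symm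
  have hI1 : (∫ y in closedBall (0:EuclideanSpace ℝ (Fin d)) R, a y * b ‖x - y‖) ≤ (1 + ε / 2) * b s := by
    have hs0 : 0 ≤ s - R := by linarith
    have step1 : (∫ y in closedBall (0:EuclideanSpace ℝ (Fin d)) R, a y * b ‖x - y‖)
        ≤ ∫ y in closedBall (0:EuclideanSpace ℝ (Fin d)) R, a y * b (s - R) := by
      refine setIntegral_mono_on hint_integrand.integrableOn
        ((ha_intg.mul_const (b (s - R))).integrableOn) measurableSet_closedBall fun y hy => ?_
      refine mul_le_mul_of_nonneg_left ?_ (ha_nn y)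
      refine b_mono b hb_even hb_anti ?_
      rw [abs_of_nonneg hs0, abs_of_nonneg (norm_nonneg _)]
      have h1 : ‖y‖ ≤ R := by
        rw [mem_closedBall, dist_zero_right] at hy; exact hy
      have h2 := norm_sub_norm_le x y
      linarith
    have step2 : (∫ y in closedBall (0:EuclideanSpace ℝ (Fin d)) R, a y * b (s - R))
        ≤ b (s - R) := by
      rw [integral_mul_const]
      have h3 : (∫ y in closedBall (0:EuclideanSpace ℝ (Fin d)) R, a y) ≤ 1 := by
        rw [← ha_int]
        exact setIntegral_le_integral ha_intg (Filter.Eventually.of_forall ha_nn)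
      have h4 : (0:ℝ) ≤ ∫ y in closedBall (0:EuclideanSpace ℝ (Fin d)) R, a y :=
        setIntegral_nonneg measurableSet_closedBall fun y _ => ha_nn y
      nlinarith [hb0 (s - R)]
    calc (∫ y in closedBall (0:EuclideanSpace ℝ (Fin d)) R, a y * b ‖x - y‖)
        ≤ b (s - R) := le_trans step1 step2
      _ ≤ (1 + ε / 2) * b s := hN₁ s hsN₁
  have hI2 : (∫ y in (closedBall (0:EuclideanSpace ℝ (Fin d)) R)ᶜ, a y * b ‖x - y‖) ≤ (ε / 2) * b s := by
    set G : ℝ → ℝ := fun r => (Set.Ioi R).indicator (fun r => b r * b (s - r) / r ^ (d - 1)) r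
      with hGdef
    have hGnn : ∀ r, 0 ≤ G r := by
      intro r
      refine Set.indicator_nonneg (fun r hr => ?_) r
      have hr0 : (0:ℝ) < r := lt_of_le_of_lt (by linarith) hr
      exact div_nonneg (mul_nonneg (hb0 _) (hb0 _)) (pow_nonneg hr0.le _)
    have hGmeas : Measurable G := by
      refine Measurable.indicator ?_ measurableSet_Ioi
      exact (hbm.mul (hbm.comp (measurable_const.sub measurable_id))).div
        (measurable_id.pow_const _)
    -- integrability of the radial majorant
    have hGfin : ∫⁻ r in Set.Ioi (0:ℝ),
        ENNReal.ofReal (r ^ (Module.finrank ℝ (EuclideanSpace ℝ (Fin d)) - 1)) *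
          (‖G r‖₊ : ℝ≥0∞) < ⊤ := by
      rw [hdim]
      have h1 : ∀ r ∈ Set.Ioi (0:ℝ),
          ENNReal.ofReal (r ^ (d - 1)) * (‖G r‖₊ : ℝ≥0∞) ≤ ENNReal.ofReal (b 0 * b r) := by
        intro r hr
        have hr0 : (0:ℝ) < r := hr
        rw [← enorm_eq_nnnorm, Real.enorm_eq_ofReal (hGnn r),
          ← ENNReal.ofReal_mul (pow_nonneg hr0.le _)]
        refine ENNReal.ofReal_le_ofReal ?_
        by_cases hrR : r ∈ Set.Ioi R
        · rw [hGdef]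
          simp only [Set.indicator_of_mem hrR]
          have hrp : r ^ (d - 1) ≠ 0 := by positivity
          rw [mul_div_assoc', mul_comm (r ^ (d-1)), mul_div_assoc, div_self hrp, mul_one]
          calc b r * b (s - r) ≤ b r * b 0 :=
                mul_le_mul_of_nonneg_left (hbtop _) (hb0 r)
            _ = b 0 * b r := mul_comm _ _
        · rw [hGdef]
          simp only [Set.indicator_of_notMem hrR, mul_zero]
          exact mul_nonneg (hb0 _) (hb0 _)
      calc ∫⁻ r in Set.Ioi (0:ℝ), ENNReal.ofReal (r ^ (d - 1)) * (‖G r‖₊ : ℝ≥0∞)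
          ≤ ∫⁻ r in Set.Ioi (0:ℝ), ENNReal.ofReal (b 0 * b r) := by
            refine setLIntegral_mono ((measurable_const.mul hbm).ennreal_ofReal) h1
        _ ≤ ∫⁻ r, ENNReal.ofReal (b 0 * b r) := setLIntegral_le_lintegral _ _
        _ < ⊤ := (hb_int.const_mul (b 0)).lintegral_lt_top
    have hGint : Integrable (fun y : EuclideanSpace ℝ (Fin d) => G ‖y‖) :=
      my_integrable_norm volume hGmeas hGfin
    -- pointwise bound off the ball
    have hpt : ∀ y ∈ (closedBall (0:EuclideanSpace ℝ (Fin d)) R)ᶜ,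
        a y * b ‖x - y‖ ≤ ε₁ * G ‖y‖ := by
      intro y hy
      have hyR : R < ‖y‖ := by
        rw [Set.mem_compl_iff, mem_closedBall, dist_zero_right, not_le] at hy
        exact hy
      have hy0 : (0:ℝ) < ‖y‖ := lt_of_le_of_lt (by linarith) hyR
      have h1 : a y ≤ ε₁ * b ‖y‖ / ‖y‖ ^ (d - 1) := hR₀ y (le_trans hRR₀ hyR.le)
      have h2 : b ‖x - y‖ ≤ b (s - ‖y‖) := by
        refine b_mono b hb_even hb_anti ?_
        rw [abs_of_nonneg (norm_nonneg _)]
        exact abs_norm_sub_norm_le x y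
      have hGy : G ‖y‖ = b ‖y‖ * b (s - ‖y‖) / ‖y‖ ^ (d - 1) := by
        rw [hGdef]; simp only [Set.indicator_of_mem (Set.mem_Ioi.mpr hyR)]
      rw [hGy]
      have h3 : a y * b ‖x - y‖ ≤ (ε₁ * b ‖y‖ / ‖y‖ ^ (d - 1)) * b (s - ‖y‖) :=
        mul_le_mul h1 h2 (hb0 _)
          (div_nonneg (mul_nonneg hε₁.le (hb0 _)) (pow_nonneg (norm_nonneg _) _))
      calc a y * b ‖x - y‖ ≤ (ε₁ * b ‖y‖ / ‖y‖ ^ (d - 1)) * b (s - ‖y‖) := h3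
        _ = ε₁ * (b ‖y‖ * b (s - ‖y‖) / ‖y‖ ^ (d - 1)) := by ring
    -- chain
    have hc1 : (∫ y in (closedBall (0:EuclideanSpace ℝ (Fin d)) R)ᶜ, a y * b ‖x - y‖)
        ≤ ∫ y in (closedBall (0:EuclideanSpace ℝ (Fin d)) R)ᶜ, ε₁ * G ‖y‖ :=
      setIntegral_mono_on hint_integrand.integrableOn
        ((hGint.const_mul ε₁).integrableOn) measurableSet_closedBall.compl hpt
    have hc2 : (∫ y in (closedBall (0:EuclideanSpace ℝ (Fin d)) R)ᶜ, ε₁ * G ‖y‖)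
        ≤ ∫ y : EuclideanSpace ℝ (Fin d), ε₁ * G ‖y‖ :=
      setIntegral_le_integral (hGint.const_mul ε₁)
        (Filter.Eventually.of_forall fun y => mul_nonneg hε₁.le (hGnn _))
    -- compute the full-space integral
    have hval : (∫ y : EuclideanSpace ℝ (Fin d), G ‖y‖)
        = σ * ∫ r in Set.Ioi (0:ℝ), r ^ (d - 1) * G r := by
      rw [integral_fun_norm_addHaar volume G, hdim, nsmul_eq_mul, smul_eq_mul, hσdef, mul_assoc]
      norm_num [smul_eq_mul]
      exact Or.inl (Or.inl rfl)
    have hval2 : (∫ r in Set.Ioi (0:ℝ), r ^ (d - 1) * G r)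
        = ∫ r in Set.Ioi R, b r * b (s - r) := by
      have : ∀ r ∈ Set.Ioi (0:ℝ), r ^ (d - 1) * G r
          = (Set.Ioi R).indicator (fun r => b r * b (s - r)) r := by
        intro r hr
        have hr0 : (0:ℝ) < r := hr
        by_cases hrR : r ∈ Set.Ioi R
        · rw [hGdef]
          simp only [Set.indicator_of_mem hrR]
          have hrp : r ^ (d - 1) ≠ 0 := by positivity
          field_simp
        · rw [hGdef]
          simp [Set.indicator_of_notMem hrR]
      rw [setIntegral_congr_fun measurableSet_Ioi this,
        setIntegral_indicator measurableSet_Ioi, Set.Ioi_inter_Ioi,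
        max_eq_right (by linarith : (0:ℝ) ≤ R)]
    have hintrb : IntegrableOn (fun r => b r * b (s - r)) (Set.Ioi rb) := by
      refine Integrable.mono' ((hb_int.const_mul (b 0)).integrableOn)
        ((hbm.mul (hbm.comp (measurable_const.sub measurable_id))).aestronglyMeasurable)
        (Filter.Eventually.of_forall fun r => ?_)
      rw [Real.norm_eq_abs, abs_of_nonneg (mul_nonneg (hb0 _) (hb0 _))]
      calc b r * b (s - r) ≤ b r * b 0 := mul_le_mul_of_nonneg_left (hbtop _) (hb0 r)
        _ = b 0 * b r := mul_comm _ _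
    have hmono : (∫ r in Set.Ioi R, b r * b (s - r)) ≤ ∫ r in Set.Ioi rb, b r * b (s - r) := by
      refine setIntegral_mono_set hintrb
        (Filter.Eventually.of_forall fun r => mul_nonneg (hb0 _) (hb0 _))
        (HasSubset.Subset.eventuallyLE (Set.Ioi_subset_Ioi hRrb))
    have hend : (∫ r in Set.Ioi rb, b r * b (s - r)) ≤ B * b s := by
      have : (∫ r in Set.Ioi rb, b r * b (s - r)) = ∫ r in Set.Ioi rb, b (s - r) * b r := by
        refine setIntegral_congr_fun measurableSet_Ioi fun r _ => mul_comm _ _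
      rw [this]
      exact hsub s hsρ
    have hVnn : (0:ℝ) ≤ ∫ r in Set.Ioi R, b r * b (s - r) :=
      setIntegral_nonneg measurableSet_Ioi fun r _ => mul_nonneg (hb0 _) (hb0 _)
    have hVB : (∫ r in Set.Ioi R, b r * b (s - r)) ≤ B * b s := le_trans hmono hend
    calc (∫ y in (closedBall (0:EuclideanSpace ℝ (Fin d)) R)ᶜ, a y * b ‖x - y‖)
        ≤ ∫ y : EuclideanSpace ℝ (Fin d), ε₁ * G ‖y‖ := le_trans hc1 hc2
      _ = ε₁ * ∫ y : EuclideanSpace ℝ (Fin d), G ‖y‖ := by rw [integral_const_mul]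
      _ = ε₁ * (σ * ∫ r in Set.Ioi R, b r * b (s - r)) := by rw [hval, hval2]
      _ ≤ ε₁ * (σ * (B * b s)) := by
          refine mul_le_mul_of_nonneg_left (mul_le_mul_of_nonneg_left hVB hσ) hε₁.le
      _ = (ε₁ * (σ * B)) * b s := by ring
      _ ≤ (ε / 2) * b s := mul_le_mul_of_nonneg_right hε₁' (hb0 s)
  rw [hsplit]
  have := hb_pos s
  nlinarith

theorem stmt_17 {d : ℕ} (hd : 1 ≤ d)
    (b : ℝ → ℝ) (hb_int : Integrable b) (hb_even : ∀ s, b (-s) = b s)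
    (hb_pos : ∀ s, 0 < b s) (hb_anti : AntitoneOn b (Set.Ici 0))
    (hb_to0 : Tendsto b atTop (nhds 0))
    (hb_lt : ∀ τ ≥ (0:ℝ), Tendsto (fun s => b (s + τ) / b s) atTop (nhds 1))
    (B rb ρb : ℝ) (hB : 0 < B) (hrb : 0 < rb) (hρb : 0 < ρb)
    (hsub : ∀ s > ρb, ∫ τ in Set.Ioi rb, b (s - τ) * b τ ≤ B * b s)
    (a : EuclideanSpace ℝ (Fin d) → ℝ)
    (ha_meas : Measurable a) (ha_nn : ∀ x, 0 ≤ a x) (ha_int : ∫ x, a x = 1)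
    (ha_small : Tendsto (fun x : EuclideanSpace ℝ (Fin d) =>
        a x * ‖x‖ ^ (d - 1) / b ‖x‖) (Filter.comap (fun x => ‖x‖) atTop) (nhds 0)) :
    Filter.limsup
        (fun l => ⨆ x ∈ {x : EuclideanSpace ℝ (Fin d) | b ‖x‖ < l},
          conv a (fun y => b ‖y‖) x / b ‖x‖)
        (nhdsWithin 0 (Set.Ioi 0)) ≤ 1 := by
  have hconv : ∀ x : EuclideanSpace ℝ (Fin d),
      conv a (fun y => b ‖y‖) x = ∫ y, a y * b ‖x - y‖ := by
    intro x
    have h := integral_sub_left_eq_self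
      (fun z : EuclideanSpace ℝ (Fin d) => a z * b ‖x - z‖) volume x
    simp only [sub_sub_cancel] at h
    exact h
  have hconv_nn : ∀ x : EuclideanSpace ℝ (Fin d), 0 ≤ conv a (fun y => b ‖y‖) x := by
    intro x
    rw [hconv]
    exact integral_nonneg fun y => mul_nonneg (ha_nn y) (hb_pos _).le
  have hu_nn : ∀ l : ℝ, 0 ≤ ⨆ x ∈ {x : EuclideanSpace ℝ (Fin d) | b ‖x‖ < l},
      conv a (fun y => b ‖y‖) x / b ‖x‖ := fun l =>
    Real.iSup_nonneg fun x => Real.iSup_nonneg fun _ =>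
      div_nonneg (hconv_nn x) (hb_pos _).le
  refine le_of_forall_pos_le_add fun ε hε => ?_
  obtain ⟨N, hN0, hN⟩ := key_bound hd b hb_int hb_even hb_pos hb_anti hb_lt B rb ρb hB hrb hρb
    hsub a ha_meas ha_nn ha_int ha_small hε
  refine Filter.limsup_le_of_le (Filter.isCoboundedUnder_le_of_le _ hu_nn) ?_
  filter_upwards [Ioo_mem_nhdsGT_of_mem (Set.mem_Ico.mpr ⟨le_refl (0:ℝ), hb_pos N⟩)] with l hl
  refine Real.iSup_le (fun x => Real.iSup_le (fun hx => ?_) (by linarith)) (by linarith)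
  have hx' : b ‖x‖ < l := hx
  have hxN : N ≤ ‖x‖ := by
    by_contra h
    push_neg at h
    have hle : b N ≤ b ‖x‖ := b_mono b hb_even hb_anti
      (by rw [abs_of_nonneg hN0, abs_of_nonneg (norm_nonneg x)]; exact h.le)
    have := hl.2
    linarith
  rw [hconv, div_le_iff₀ (hb_pos _)]
  exact hN x hxN
end
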